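/- arXiv:1603.01807 — 4 statements merged into one kernel-verified Lean document; each statement's English description precedes it below -/
import Mathlib

section
/- If a sequence a : ℕ → ℤ satisfies a(n) = 2·a(n-1) - a(n-3) for all n ≥ 4, with a(2) = 4, a(3) = 7, a(4) = 12, then a(n) = a(n-1) + a(n-2) + 1 for all n ≥ 4. -/
theorem stmt_1 (a : ℕ → ℤ)
    (hrec : ∀ n, 4 ≤ n → a n = 2 * a (n - 1) - a (n - 3))
    (h2 : a 2 = 4) (h3 : a 3 = 7) (h4 : a 4 = 12) :
    ∀ n, 4 ≤ n → a n = a (n - 1) + a (n - 2) + 1 := by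
  intro n hn
  induction n, hn using Nat.le_induction with
  | base => simp [h2, h3, h4]
  | succ n hn ih =>
    have h1 : a (n + 1) = 2 * a n - a (n - 2) := by
      have := hrec (n + 1) (by omega)
      simpa [show n + 1 - 1 = n from rfl, show n + 1 - 3 = n - 2 by omega] using this
    have h2' : a n = a (n - 1) + a (n - 2) + 1 := ih
    have e1 : n + 1 - 1 = n := rfl
    have e2 : n + 1 - 2 = n - 1 := by omega
    rw [e1, e2, h1, h2']
    ring
end

section
/- Let a : ℕ → ℤ satisfy a(2) = 4, a(3) = 7, and a(n) = a(n-1) + a(n-2) + 1 for n ≥ 4, and define c : ℕ → ℤ by c(2) = 7 and c(n) = c(n-1) + a(n) for n ≥ 3. Then c(n) = a(n+2) - (n+3) for all n ≥ 2. -/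
theorem stmt_2 (a c : ℕ → ℤ)
    (ha2 : a 2 = 4) (ha3 : a 3 = 7)
    (harec : ∀ n, 4 ≤ n → a n = a (n - 1) + a (n - 2) + 1)
    (hc2 : c 2 = 7)
    (hcrec : ∀ n, 3 ≤ n → c n = c (n - 1) + a n) :
    ∀ n, 2 ≤ n → c n = a (n + 2) - (n + 3) := by
  intro n hn
  induction n with
  | zero => omega
  | succ m ih =>
    rcases Nat.lt_or_ge m 2 with hm | hm
    · interval_cases m
      · omega
      · have h4 := harec 4 (by norm_num)
        simp only [show (4:ℕ)-1 = 3 from rfl, show (4:ℕ)-2 = 2 from rfl] at h4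
        push_cast
        omega
    · have hrec := hcrec (m + 1) (by omega)
      simp only [Nat.add_sub_cancel] at hrec
      have ha := harec (m + 3) (by omega)
      simp only [show m+3-1 = m+2 from rfl, show m+3-2 = m+1 from rfl] at ha
      have := ih hm
      push_cast
      push_cast at this
      have h1 : m + 1 + 2 = m + 3 := rfl
      rw [hrec, this, h1, ha]
      ring
end

section
/- In any graph G consisting of a Hamiltonian cycle H on vertices v_0, ..., v_{n-1} together with a set S of additional chords (spokes), every nonempty subset F ⊆ S is the chord-set of at most two cycles of G; that is, there are at most two cycles C of G such that the set of chords of S contained in C is exactly F. -/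
section StmtAux

open SimpleGraph List

variable {V : Type*} [DecidableEq V] {G : SimpleGraph V}

lemma countP_edges_walk {u v : V} (w : G.Walk u v) (x : V) :
    w.edges.countP (fun e => decide (x ∈ e)) =
      w.support.dropLast.count x + w.support.tail.count x := by
  induction w with
  | nil => simp
  | cons h p ih =>
    rename_i a b c
    have hsupp : p.support.count x = (if b = x then 1 else 0) + p.support.tail.count x := by
      conv_lhs => rw [p.support_eq_cons]
      rw [List.count_cons]
      split <;> simp_all <;> omega
    rw [Walk.edges_cons, Walk.support_cons, List.countP_cons,
      List.dropLast_cons_of_ne_nil p.support_ne_nil, List.count_cons, List.tail_cons, ih, hsupp]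
    have hne := h.ne
    have hmem : (if decide (x ∈ s(a,b)) then 1 else 0) =
        (if a = x then 1 else 0) + (if b = x then 1 else 0) := by
      by_cases hxa : a = x <;> by_cases hxb : b = x <;>
        simp_all [Sym2.mem_iff, eq_comm]
    simp only [beq_iff_eq] at *
    omega

lemma count_dropLast_eq_count_tail {u : V} (w : G.Walk u u) (x : V) :
    w.support.dropLast.count x = w.support.tail.count x := by
  cases w with
  | nil => simp
  | cons h p =>
    rename_i b
    have hlast : p.support.getLast p.support_ne_nil = u := p.getLast_support
    have hdecomp : p.support = p.support.dropLast ++ [u] := by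
      conv_lhs => rw [← List.dropLast_append_getLast p.support_ne_nil, hlast]
    rw [Walk.support_cons, List.dropLast_cons_of_ne_nil p.support_ne_nil, List.tail_cons,
      List.count_cons]
    conv_rhs => rw [hdecomp]
    rw [List.count_append, List.count_singleton]

/-- In a cycle, each vertex is incident to either 0 or 2 edges;
the number of incident edges equals twice the count in support.tail. -/
lemma cycle_countP_edges {u : V} (w : G.Walk u u) (hw : w.IsCycle) (x : V) :
    w.edges.countP (fun e => decide (x ∈ e)) = 2 * w.support.tail.count x := by
  rw [countP_edges_walk, count_dropLast_eq_count_tail]; omega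

lemma cycle_count_tail_le_one {u : V} (w : G.Walk u u) (hw : w.IsCycle) (x : V) :
    w.support.tail.count x ≤ 1 :=
  List.nodup_iff_count_le_one.mp hw.support_nodup x

lemma card_incident_filter {u : V} (w : G.Walk u u) (hw : w.IsCycle) (x : V) :
    (w.edges.toFinset.filter (fun e => x ∈ e)).card = 2 * w.support.tail.count x := by
  classical
  rw [← cycle_countP_edges w hw x]
  have h1 : Finset.filter (fun e => x ∈ e) w.edges.toFinset
      = (w.edges.filter (fun e => decide (x ∈ e))).toFinset := by
    ext e; simp
  rw [h1, List.toFinset_card_of_nodup (hw.edges_nodup.filter _), List.countP_eq_length_filter]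

lemma chain'_shares_vertex {u v : V} (w : G.Walk u v) :
    List.Chain' (fun e e' => ∃ x, x ∈ e ∧ x ∈ e') w.edges := by
  induction w with
  | nil => simp [List.Chain']
  | cons h p ih =>
    rename_i a b c
    rw [Walk.edges_cons, List.Chain', List.isChain_cons]
    refine ⟨?_, ih⟩
    intro e he
    cases p with
    | nil => simp at he
    | cons h' q =>
      rw [Walk.edges_cons] at he
      simp only [List.head?_cons, Option.mem_def, Option.some.injEq] at he
      exact ⟨b, by simp [← he]⟩

lemma chain'_and {α : Type*} {R S : α → α → Prop} {l : List α}
    (hR : List.Chain' R l) (hS : List.Chain' S l) :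
    List.Chain' (fun a b => R a b ∧ S a b) l := by
  rw [List.Chain', List.isChain_iff_getElem] at *
  exact fun i h => ⟨hR i h, hS i h⟩

lemma ham_tail_count {v : V} {H : G.Walk v v} (hH : H.IsHamiltonianCycle) (x : V) :
    H.support.tail.count x = 1 := by
  have hsup : H.support.count x = if x = v then 2 else 1 := by
    split
    · subst x; exact hH.count_support_self
    · exact hH.support_count_of_ne (fun h => by simp_all)
  have hc := H.support_eq_cons
  rw [hc, List.count_cons] at hsup
  simp only [beq_iff_eq] at hsup
  by_cases hxv : x = v
  · subst hxv; simp at hsup; omega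
  · have hvx : ¬ v = x := fun h => hxv h.symm
    simp [hvx, hxv] at hsup; omega

lemma ham_incident_card {v : V} {H : G.Walk v v} (hH : H.IsHamiltonianCycle) (x : V) :
    (H.edges.toFinset.filter (fun e => x ∈ e)).card = 2 := by
  rw [card_incident_filter H hH.isCycle x, ham_tail_count hH x]

lemma ham_incident_pair {v : V} {H : G.Walk v v} (hH : H.IsHamiltonianCycle) {x a b : V}
    (hab : a ≠ b) (ha : s(x,a) ∈ H.edges) (hb : s(x,b) ∈ H.edges) :
    ∀ e, e ∈ H.edges → x ∈ e → e = s(x,a) ∨ e = s(x,b) := by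
  classical
  have hne : s(x,a) ≠ s(x,b) := fun h => hab (Sym2.congr_right.mp h)
  have hsub : ({s(x,a), s(x,b)} : Finset (Sym2 V)) ⊆
      H.edges.toFinset.filter (fun e => x ∈ e) := by
    intro e he
    simp only [Finset.mem_insert, Finset.mem_singleton] at he
    rcases he with rfl | rfl <;> simp [ha, hb]
  have hcard : (H.edges.toFinset.filter (fun e => x ∈ e)).card ≤
      ({s(x,a), s(x,b)} : Finset (Sym2 V)).card := by
    rw [ham_incident_card hH x, Finset.card_insert_of_notMem (by simpa using hne),
      Finset.card_singleton]
  have := Finset.eq_of_subset_of_card_le hsub hcard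
  intro e he hxe
  have : e ∈ ({s(x,a), s(x,b)} : Finset (Sym2 V)) := by
    rw [this]; simp [he, hxe]
  simpa using this

lemma parity_iff_aux (A B A' B' : Prop) [Decidable A] [Decidable B] [Decidable A'] [Decidable B'] (k : ℕ)
    (h1 : (k + ((if A then 1 else 0) + (if B then 1 else 0))) % 2 = 0)
    (h2 : (k + ((if A' then 1 else 0) + (if B' then 1 else 0))) % 2 = 0) :
    (¬ (A ↔ A')) ↔ (¬ (B ↔ B')) := by
  by_cases hA : A <;> by_cases hB : B <;> by_cases hA' : A' <;> by_cases hB' : B' <;>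
    simp only [hA, hB, hA', hB', if_true, if_false] at h1 h2 <;>
    simp only [hA, hB, hA', hB', iff_true, iff_false, not_true, not_false_iff, not_not] <;>
    omega

lemma pair_lemma {v : V} {H : G.Walk v v} (hH : H.IsHamiltonianCycle)
    {S F : Set (Sym2 V)} (hS : S = G.edgeSet \ {e | e ∈ H.edges}) (hF : F ⊆ S)
    {u u' : V} {w : G.Walk u u} {w' : G.Walk u' u'} (hw : w.IsCycle) (hw' : w'.IsCycle)
    {C C' : Set (Sym2 V)} (hCw : {e | e ∈ w.edges} = C) (hC'w : {e | e ∈ w'.edges} = C')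
    (hCS : C ∩ S = F) (hC'S : C' ∩ S = F) (hne : C ≠ C') :
    ∀ e ∈ H.edges, (e ∈ C ↔ e ∉ C') := by
  classical
  have hmemC : ∀ e, e ∈ C ↔ e ∈ w.edges := fun e => by rw [← hCw]; rfl
  have hmemC' : ∀ e, e ∈ C' ↔ e ∈ w'.edges := fun e => by rw [← hC'w]; rfl
  have hFC : F ⊆ C := hCS ▸ Set.inter_subset_left
  have hFC' : F ⊆ C' := hC'S ▸ Set.inter_subset_left
  have hFH : ∀ e ∈ F, e ∉ H.edges := fun e he => (hS ▸ hF he).2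
  have hCH : ∀ e, e ∈ C → e ∉ F → e ∈ H.edges := by
    intro e heC heF
    by_contra heH
    exact heF (hCS ▸ ⟨heC, hS ▸ ⟨w.edges_subset_edgeSet ((hmemC e).mp heC), heH⟩⟩)
  have hC'H : ∀ e, e ∈ C' → e ∉ F → e ∈ H.edges := by
    intro e heC heF
    by_contra heH
    exact heF (hC'S ▸ ⟨heC, hS ▸ ⟨w'.edges_subset_edgeSet ((hmemC' e).mp heC), heH⟩⟩)
  set P : Sym2 V → Prop := fun e => ¬ (e ∈ C ↔ e ∈ C') with hP
  have hFfin : F.Finite := w.edges.finite_toSet.subset (fun e he => (hmemC e).mp (hFC he))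
  -- local key
  have key : ∀ x a b, a ≠ b → s(x,a) ∈ H.edges → s(x,b) ∈ H.edges →
      (P s(x,a) ↔ P s(x,b)) := by
    intro x a b hab ha hb
    have hee : s(x,a) ≠ s(x,b) := fun h => hab (Sym2.congr_right.mp h)
    set Ffin := hFfin.toFinset.filter (fun e => x ∈ e) with hFfindef
    have main : ∀ (u₀ : V) (w₀ : G.Walk u₀ u₀), w₀.IsCycle → ∀ (C₀ : Set (Sym2 V)),
        (∀ e, e ∈ C₀ ↔ e ∈ w₀.edges) → C₀ ∩ S = F →
        Even (Ffin.card +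
          ((if s(x,a) ∈ C₀ then 1 else 0) + (if s(x,b) ∈ C₀ then 1 else 0))) := by
      intro u₀ w₀ hc C₀ hm hC₀S
      have hF₀ : F ⊆ C₀ := hC₀S ▸ Set.inter_subset_left
      have hC₀H : ∀ e, e ∈ C₀ → e ∉ F → e ∈ H.edges := by
        intro e heC heF
        by_contra heH
        exact heF (hC₀S ▸ ⟨heC, hS ▸ ⟨w₀.edges_subset_edgeSet ((hm e).mp heC), heH⟩⟩)
      set N := w₀.edges.toFinset.filter (fun e => x ∈ e) with hN
      have hNcard : Even N.card := by
        rw [hN, card_incident_filter w₀ hc x]; exact even_two_mul _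
      have hsplit : (N.filter (fun e => e ∈ F)).card
          + (N.filter (fun e => ¬ e ∈ F)).card = N.card :=
        Finset.card_filter_add_card_filter_not _
      have hNf : N.filter (fun e => e ∈ F) = Ffin := by
        ext e
        simp only [hN, hFfindef, Finset.mem_filter, List.mem_toFinset, Set.Finite.mem_toFinset]
        constructor
        · rintro ⟨⟨he, hx⟩, hf⟩; exact ⟨hf, hx⟩
        · rintro ⟨hf, hx⟩; exact ⟨⟨(hm e).mp (hF₀ hf), hx⟩, hf⟩
      have hNh : N.filter (fun e => ¬ e ∈ F)
          = ({s(x,a), s(x,b)} : Finset (Sym2 V)).filter (fun e => e ∈ C₀) := by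
        ext e
        simp only [hN, Finset.mem_filter, List.mem_toFinset, Finset.mem_insert,
          Finset.mem_singleton]
        constructor
        · rintro ⟨⟨he, hx⟩, hf⟩
          exact ⟨ham_incident_pair hH hab ha hb e (hC₀H e ((hm e).mpr he) hf) hx,
            (hm e).mpr he⟩
        · rintro ⟨hor, hc₀⟩
          refine ⟨⟨(hm e).mp hc₀, ?_⟩, ?_⟩
          · rcases hor with rfl | rfl <;> simp
          · rcases hor with rfl | rfl
            · exact fun hf => hFH _ hf ha
            · exact fun hf => hFH _ hf hb
      have hpcard : (({s(x,a), s(x,b)} : Finset (Sym2 V)).filter (fun e => e ∈ C₀)).card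
          = (if s(x,a) ∈ C₀ then 1 else 0) + (if s(x,b) ∈ C₀ then 1 else 0) := by
        rw [Finset.filter_insert]
        by_cases h1 : s(x,a) ∈ C₀ <;> by_cases h2 : s(x,b) ∈ C₀ <;>
          simp [h1, h2, Finset.filter_singleton, Finset.card_insert_of_notMem, hee]
      rw [← hsplit, hNf, hNh, hpcard] at hNcard
      exact hNcard
    have h1 := main u w hw C hmemC hCS
    have h2 := main u' w' hw' C' hmemC' hC'S
    rw [Nat.even_iff] at h1 h2
    simp only [hP]
    exact parity_iff_aux _ _ _ _ _ h1 h2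
  -- propagate along H
  have hnd : H.edges.Nodup := hH.isCycle.edges_nodup
  have hchain1 : List.Chain' (fun e e' => (∃ x, x ∈ e ∧ x ∈ e') ∧ e ≠ e') H.edges :=
    chain'_and (chain'_shares_vertex H) hnd.isChain
  have hchain : List.Chain' (fun e e' => P e ↔ P e') H.edges := by
    rw [List.Chain', List.isChain_iff_getElem] at hchain1 ⊢
    intro i hi
    obtain ⟨⟨x, hxe, hxe'⟩, hee⟩ := hchain1 i hi
    obtain ⟨a, hea⟩ := Sym2.mem_iff_exists.mp hxe
    obtain ⟨b, heb⟩ := Sym2.mem_iff_exists.mp hxe'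
    rw [hea, heb] at hee ⊢
    have hab : a ≠ b := fun h => hee (by rw [h])
    exact key x a b hab (hea ▸ H.edges.getElem_mem _) (heb ▸ H.edges.getElem_mem _)
  haveI : IsTrans (Sym2 V) (fun e e' => P e ↔ P e') := ⟨fun _ _ _ h1 h2 => h1.trans h2⟩
  have hpw := List.isChain_iff_pairwise.mp hchain
  have hall : ∀ e ∈ H.edges, ∀ e' ∈ H.edges, (P e ↔ P e') := by
    intro e he e' he'
    by_cases h : e = e'
    · rw [h]
    · haveI : Std.Symm (fun e e' : Sym2 V => P e ↔ P e') := ⟨fun _ _ h => h.symm⟩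
      exact hpw.forall he he' h
  have hex : ∃ e₀, e₀ ∈ H.edges ∧ P e₀ := by
    have hx : ¬ ∀ e, (e ∈ C ↔ e ∈ C') := fun h => hne (Set.ext h)
    obtain ⟨e₀, hPe⟩ := not_forall.mp hx
    refine ⟨e₀, ?_, hPe⟩
    have he0F : e₀ ∉ F := fun hf => hPe ⟨fun _ => hFC' hf, fun _ => hFC hf⟩
    by_cases hc : e₀ ∈ C
    · exact hCH e₀ hc he0F
    · have hc' : e₀ ∈ C' := by tauto
      exact hC'H e₀ hc' he0F
  obtain ⟨e₀, he₀H, he₀P⟩ := hex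
  intro e he
  have hPe : P e := (hall e he e₀ he₀H).mpr he₀P
  simp only [hP] at hPe
  tauto

end StmtAux

/-- In a graph consisting of a Hamiltonian cycle `H` together with a set `S` of
spokes (chords), every nonempty `F ⊆ S` is the spoke-set of at most two cycles. -/
theorem stmt_8 {V : Type*} [DecidableEq V] (G : SimpleGraph V) (v : V) (H : G.Walk v v)
    (hH : H.IsHamiltonianCycle)
    (S : Set (Sym2 V)) (hS : S = G.edgeSet \ {e | e ∈ H.edges})
    (F : Set (Sym2 V)) (hF : F ⊆ S) (hFne : F.Nonempty) :
    ∀ C₁ C₂ C₃ : Set (Sym2 V),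
      ((∃ (u : V) (w : G.Walk u u), w.IsCycle ∧ {e | e ∈ w.edges} = C₁) ∧ C₁ ∩ S = F) →
      ((∃ (u : V) (w : G.Walk u u), w.IsCycle ∧ {e | e ∈ w.edges} = C₂) ∧ C₂ ∩ S = F) →
      ((∃ (u : V) (w : G.Walk u u), w.IsCycle ∧ {e | e ∈ w.edges} = C₃) ∧ C₃ ∩ S = F) →
      C₁ = C₂ ∨ C₁ = C₃ ∨ C₂ = C₃ := by
  rintro C₁ C₂ C₃ ⟨⟨u₁, w₁, hw₁, hCw₁⟩, hC₁S⟩ ⟨⟨u₂, w₂, hw₂, hCw₂⟩, hC₂S⟩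
    ⟨⟨u₃, w₃, hw₃, hCw₃⟩, hC₃S⟩
  by_cases h12 : C₁ = C₂
  · exact Or.inl h12
  by_cases h13 : C₁ = C₃
  · exact Or.inr (Or.inl h13)
  refine Or.inr (Or.inr ?_)
  have key12 := pair_lemma hH hS hF hw₁ hw₂ hCw₁ hCw₂ hC₁S hC₂S h12
  have key13 := pair_lemma hH hS hF hw₁ hw₃ hCw₁ hCw₃ hC₁S hC₃S h13
  have hmem₂ : ∀ e, e ∈ C₂ ↔ e ∈ w₂.edges := fun e => by rw [← hCw₂]; rfl
  have hmem₃ : ∀ e, e ∈ C₃ ↔ e ∈ w₃.edges := fun e => by rw [← hCw₃]; rfl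
  have hFC₂ : F ⊆ C₂ := hC₂S ▸ Set.inter_subset_left
  have hFC₃ : F ⊆ C₃ := hC₃S ▸ Set.inter_subset_left
  have hC₂H : ∀ e, e ∈ C₂ → e ∉ F → e ∈ H.edges := by
    intro e heC heF
    by_contra heH
    exact heF (hC₂S ▸ ⟨heC, hS ▸ ⟨w₂.edges_subset_edgeSet ((hmem₂ e).mp heC), heH⟩⟩)
  have hC₃H : ∀ e, e ∈ C₃ → e ∉ F → e ∈ H.edges := by
    intro e heC heF
    by_contra heH
    exact heF (hC₃S ▸ ⟨heC, hS ▸ ⟨w₃.edges_subset_edgeSet ((hmem₃ e).mp heC), heH⟩⟩)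
  ext e
  by_cases heH : e ∈ H.edges
  · have h2 := key12 e heH
    have h3 := key13 e heH
    tauto
  · constructor
    · intro he₂
      by_cases heF : e ∈ F
      · exact hFC₃ heF
      · exact absurd (hC₂H e he₂ heF) heH
    · intro he₃
      by_cases heF : e ∈ F
      · exact hFC₂ heF
      · exact absurd (hC₃H e he₃ heF) heH
end

section
/- Let G be a cubic graph on n vertices with a Hamiltonian cycle H. If F is a set of spokes of G and e ∈ F is a spoke intersected by no other spoke of F, and |F| > 1, then F forms at most one cycle in G (i.e., there is at most one cycle of G whose set of spokes is exactly F). -/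
open SimpleGraph

private lemma countP_eq_sum' {α : Type*} [DecidableEq α] (l : List α) (hl : l.Nodup)
    (p : α → Bool) (s : Finset α) (hsub : ∀ x ∈ l, p x → x ∈ s) (hp : ∀ x ∈ s, p x) :
    l.countP p = ∑ x ∈ s, if x ∈ l then 1 else 0 := by
  rw [List.countP_eq_length_filter, ← List.toFinset_card_of_nodup (hl.filter p)]
  have h : (l.filter p).toFinset = s.filter (· ∈ l) := by
    ext x
    simp only [List.mem_toFinset, List.mem_filter, Finset.mem_filter]
    exact ⟨fun ⟨hx, hpx⟩ => ⟨hsub x hx hpx, hx⟩, fun ⟨hx, hxl⟩ => ⟨hxl, hp x hx⟩⟩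
  rw [h, Finset.card_filter]

private def bcross {V : Type*} (f : V → Bool) : Sym2 V → Bool :=
  Sym2.lift ⟨fun a b => f a != f b, fun a b => by cases hfa : f a <;> cases hfb : f b <;> simp [hfa, hfb]⟩

private lemma bcross_mk {V : Type*} (f : V → Bool) (a b : V) :
    bcross f s(a, b) = (f a != f b) := rfl

private lemma even_countP_bcross {V : Type*} {G : SimpleGraph V} (f : V → Bool)
    {a b : V} (p : G.Walk a b) : Even (p.edges.countP (bcross f)) ↔ (f a = f b) := by
  induction p with
  | nil => simp
  | @cons a c b h q ih =>
    rw [SimpleGraph.Walk.edges_cons, List.countP_cons, bcross_mk]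
    rcases Bool.eq_false_or_eq_true (f a) with ha | ha <;>
      rcases Bool.eq_false_or_eq_true (f c) with hc | hc <;>
      rcases Bool.eq_false_or_eq_true (f b) with hbb | hbb <;>
      simp_all [Nat.even_add_one]

private lemma cut_core {V : Type*} [DecidableEq V] {G : SimpleGraph V} {u : V} (w : G.Walk u u)
    (hw : w.IsCycle) (f : V → Bool) (e₁ e₂ : Sym2 V) (hne : e₁ ≠ e₂)
    (h1 : bcross f e₁ = true) (h2 : bcross f e₂ = true)
    (hclass : ∀ e ∈ w.edges, bcross f e = true → e = e₁ ∨ e = e₂) :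
    (e₁ ∈ w.edges ↔ e₂ ∈ w.edges) := by
  have hcount := countP_eq_sum' w.edges hw.isTrail.edges_nodup (bcross f) {e₁, e₂}
    (fun x hx hpx => by rcases hclass x hx hpx with h | h <;> simp [h])
    (by
      intro e he
      rcases Finset.mem_insert.mp he with h | h
      · exact h ▸ h1
      · rw [Finset.mem_singleton] at h; exact h ▸ h2)
  have heven : Even (w.edges.countP (bcross f)) := (even_countP_bcross f w).mpr rfl
  rw [hcount, Finset.sum_insert (by simp [hne]), Finset.sum_singleton] at heven
  by_cases a : e₁ ∈ w.edges <;> by_cases b : e₂ ∈ w.edges <;> simp_all <;>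
    exact (by decide : ¬ Even 1) heven

private lemma walk_reach {V : Type*} {G : SimpleGraph V} (C : Set (Sym2 V)) (U : Set V)
    (hU : ∀ x y : V, s(x, y) ∈ C → x ∈ U → y ∈ U) :
    ∀ {a b : V} (p : G.Walk a b), (∀ e ∈ p.edges, e ∈ C) → a ∈ U → b ∈ U := by
  intro a b p
  induction p with
  | nil => exact fun _ h => h
  | @cons a c b h q ih =>
    intro he ha
    exact ih (fun e hee => he e (by simp [hee])) (hU _ _ (he _ (by simp)) ha)

private def dd (n : ℕ) (i x : Fin n) : ℕ := (x.val + n - i.val) % n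

private lemma dd_lt {n : ℕ} [NeZero n] (i x : Fin n) : dd n i x < n :=
  Nat.mod_lt _ (Nat.pos_of_ne_zero (NeZero.ne n))

private lemma dd_eq (n : ℕ) (i x : Fin n) : dd n i x = (x.val + (n - i.val)) % n := by
  unfold dd; congr 1; omega

private lemma dd_self {n : ℕ} [NeZero n] (i : Fin n) : dd n i i = 0 := by
  rw [dd_eq]
  have : i.val + (n - i.val) = n := by have := i.isLt; omega
  simp [this]

private lemma dd_val {n : ℕ} [NeZero n] (i x : Fin n) : (dd n i x + i.val) % n = x.val := by
  rw [dd_eq, Nat.mod_add_mod]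
  have : x.val + (n - i.val) + i.val = x.val + n := by have := i.isLt; omega
  rw [this, Nat.add_mod_right, Nat.mod_eq_of_lt x.isLt]

private lemma dd_inj {n : ℕ} [NeZero n] {i x y : Fin n} (h : dd n i x = dd n i y) : x = y := by
  have hx := dd_val i x
  have hy := dd_val i y
  rw [h] at hx
  exact Fin.ext (hx ▸ hy)

private lemma dd_succ {n : ℕ} [NeZero n] (hn : 2 ≤ n) (i x : Fin n) :
    dd n i (x + 1) = (dd n i x + 1) % n := by
  rw [dd_eq, dd_eq, Nat.mod_add_mod]
  have h1 : (x + 1).val = (x.val + 1) % n := by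
    rw [Fin.val_add, Fin.val_one']
    congr 1
    rw [Nat.mod_eq_of_lt hn]
  rw [h1, Nat.mod_add_mod]
  congr 1
  omega

private lemma dd_succ_cases {n : ℕ} [NeZero n] (hn : 2 ≤ n) (i x : Fin n) :
    (dd n i x = n - 1 ∧ dd n i (x + 1) = 0) ∨ dd n i (x + 1) = dd n i x + 1 := by
  have h := dd_succ hn i x
  have hlt := dd_lt i x
  rcases eq_or_ne (dd n i x) (n - 1) with he | he
  · left
    refine ⟨he, ?_⟩
    rw [h, he]
    have : n - 1 + 1 = n := by omega
    rw [this, Nat.mod_self]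
  · right
    rw [h, Nat.mod_eq_of_lt (by omega)]

private lemma dd_wrap {n : ℕ} [NeZero n] (hn : 2 ≤ n) {i x : Fin n} (h : dd n i x = n - 1) :
    x + 1 = i := by
  apply dd_inj (i := i)
  rw [dd_self]
  rcases dd_succ_cases hn i x with ⟨_, h2⟩ | h2
  · exact h2
  · have hlt := dd_lt i (x + 1)
    rw [h2, h] at hlt
    omega
  
private lemma dd_pred_cases {n : ℕ} [NeZero n] (hn : 2 ≤ n) (i x : Fin n) :
    (dd n i (x - 1) = n - 1 ∧ dd n i x = 0) ∨ dd n i x = dd n i (x - 1) + 1 := by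
  have := dd_succ_cases hn i (x - 1)
  rwa [sub_add_cancel] at this

private lemma dd_one {n : ℕ} [NeZero n] (hn : 2 ≤ n) (i : Fin n) : dd n i (i + 1) = 1 := by
  rcases dd_succ_cases hn i i with ⟨h1, _⟩ | h2
  · rw [dd_self] at h1; omega
  · rw [h2, dd_self]

set_option maxHeartbeats 1600000 in
/-- In a cubic hamiltonian graph on `Fin n` (the Hamiltonian cycle being
`v ↦ v + 1`), if `F` is a set of spokes with `|F| > 1` containing a spoke
`s(i,j)` intersected by no other spoke of `F`, then `F` forms at most one cycle. -/
theorem stmt_9 {n : ℕ} [NeZero n] (G : SimpleGraph (Fin n)) [DecidableRel G.Adj]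
    (hreg : G.IsRegularOfDegree 3)
    (hham : ∀ v : Fin n, G.Adj v (v + 1))
    (btw : Fin n → Fin n → Fin n → Prop)
    (hbtw : ∀ a b c : Fin n, btw a b c ↔
      (0 < (c.val + n - a.val) % n ∧ (c.val + n - a.val) % n < (b.val + n - a.val) % n))
    (S : Set (Sym2 (Fin n)))
    (hS : S = {e ∈ G.edgeSet | ∀ v : Fin n, e ≠ s(v, v + 1)})
    (F : Set (Sym2 (Fin n))) (hF : F ⊆ S) (hFbig : 1 < F.ncard)
    (i j : Fin n) (he : s(i, j) ∈ F)
    (hnoint : ∀ k m : Fin n, s(k, m) ∈ F → s(k, m) ≠ s(i, j) →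
      ¬ Xor' (btw i j k) (btw i j m)) :
    ∀ C₁ C₂ : Set (Sym2 (Fin n)),
      ((∃ (u : Fin n) (w : G.Walk u u), w.IsCycle ∧ {e | e ∈ w.edges} = C₁) ∧ C₁ ∩ S = F) →
      ((∃ (u : Fin n) (w : G.Walk u u), w.IsCycle ∧ {e | e ∈ w.edges} = C₂) ∧ C₂ ∩ S = F) →
      C₁ = C₂ := by
  classical
  have npos : 0 < n := Nat.pos_of_ne_zero (NeZero.ne n)
  have n4 : 4 ≤ n := by
    have h3 : (G.neighborFinset 0).card = 3 := hreg 0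
    have hsub : G.neighborFinset 0 ⊆ Finset.univ.erase 0 := by
      intro y hy
      rw [Finset.mem_erase]
      exact ⟨(G.ne_of_adj ((SimpleGraph.mem_neighborFinset _ _ _).mp hy)).symm, Finset.mem_univ y⟩
    have hcard := Finset.card_le_card hsub
    rw [h3, Finset.card_erase_of_mem (Finset.mem_univ 0), Finset.card_univ, Fintype.card_fin] at hcard
    omega
  have hn2 : 2 ≤ n := by omega
  have hsucc_ne : ∀ u : Fin n, u + 1 ≠ u := by
    intro u h
    have h1 := dd_one hn2 u
    rw [h, dd_self] at h1
    omega
  have hsucc_ne' : ∀ u : Fin n, u + 1 ≠ u - 1 := by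
    intro u h
    have h1 := dd_one hn2 u
    rw [h] at h1
    rcases dd_pred_cases hn2 u u with ⟨hp, _⟩ | hp
    · rw [hp] at h1; omega
    · rw [dd_self] at hp; omega
  have NBR : ∀ u : Fin n, ∃ z : Fin n, G.Adj u z ∧ z ≠ u + 1 ∧ z ≠ u - 1 ∧
      (∀ y, G.Adj u y → y = u + 1 ∨ y = u - 1 ∨ y = z) := by
    intro u
    have hdeg : (G.neighborFinset u).card = 3 := hreg u
    have h1 : u + 1 ∈ G.neighborFinset u := (SimpleGraph.mem_neighborFinset _ _ _).mpr (hham u)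
    have h2 : u - 1 ∈ G.neighborFinset u := by
      rw [SimpleGraph.mem_neighborFinset]
      have h := hham (u - 1)
      rw [sub_add_cancel] at h
      exact h.symm
    have hne : u + 1 ≠ u - 1 := hsucc_ne' u
    have hpair : ({u + 1, u - 1} : Finset (Fin n)) ⊆ G.neighborFinset u := by
      intro y hy
      rcases Finset.mem_insert.mp hy with h | h
      · exact h ▸ h1
      · rw [Finset.mem_singleton] at h; exact h ▸ h2
    have hcardp : ({u + 1, u - 1} : Finset (Fin n)).card = 2 := by
      rw [Finset.card_insert_of_notMem (by simp [hne]), Finset.card_singleton]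
    have hcards : (G.neighborFinset u \ {u + 1, u - 1}).card = 1 := by
      rw [Finset.card_sdiff_of_subset hpair, hdeg, hcardp]
    obtain ⟨z, hz⟩ := Finset.card_eq_one.mp hcards
    have hzmem : z ∈ G.neighborFinset u \ {u + 1, u - 1} := by
      rw [hz]; exact Finset.mem_singleton_self z
    rw [Finset.mem_sdiff] at hzmem
    refine ⟨z, (SimpleGraph.mem_neighborFinset _ _ _).mp hzmem.1, ?_, ?_, ?_⟩
    · intro h; exact hzmem.2 (by simp [h])
    · intro h; exact hzmem.2 (by simp [h])
    · intro y hy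
      by_cases hy1 : y = u + 1
      · exact Or.inl hy1
      by_cases hy2 : y = u - 1
      · exact Or.inr (Or.inl hy2)
      right; right
      have hym : y ∈ G.neighborFinset u \ {u + 1, u - 1} := by
        rw [Finset.mem_sdiff]
        exact ⟨(SimpleGraph.mem_neighborFinset _ _ _).mpr hy, by simp [hy1, hy2]⟩
      rw [hz, Finset.mem_singleton] at hym
      exact hym
  choose zf hz1 hz2 hz3 hz4 using NBR
  have hzne : ∀ u : Fin n, zf u ≠ u := fun u => (G.ne_of_adj (hz1 u)).symm
  have hzS : ∀ u : Fin n, s(u, zf u) ∈ S := by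
    intro u
    rw [hS]
    refine ⟨G.mem_edgeSet.mpr (hz1 u), ?_⟩
    intro v hv
    rcases Sym2.eq_iff.mp hv with ⟨h1, h2⟩ | ⟨h1, h2⟩
    · exact hz2 u (h1 ▸ h2)
    · exact hz3 u (h2.trans (eq_sub_iff_add_eq.mpr h1.symm))
  have hFz : ∀ u y : Fin n, s(u, y) ∈ F → y = zf u := by
    intro u y hFy
    have hSy := hF hFy
    rw [hS] at hSy
    have hadj : G.Adj u y := G.mem_edgeSet.mp hSy.1
    rcases hz4 u y hadj with h | h | h
    · exact absurd (by rw [h]) (hSy.2 u)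
    · exfalso
      apply hSy.2 (u - 1)
      rw [h, Sym2.eq_swap, sub_add_cancel]
    · exact h
  have hij : G.Adj i j := by
    have hh := hF he
    rw [hS] at hh
    exact G.mem_edgeSet.mp hh.1
  have hij_ne : i ≠ j := G.ne_of_adj hij
  have hji1 : j ≠ i + 1 := by
    have hh := hF he
    rw [hS] at hh
    intro h
    exact hh.2 i (by rw [h])
  have hji2 : j ≠ i - 1 := by
    have hh := hF he
    rw [hS] at hh
    intro h
    exact hh.2 j (by rw [Sym2.eq_swap]; congr 1; rw [h, sub_add_cancel])
  have hzij : zf i = j := (hFz i j he).symm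
  have hzji : zf j = i := (hFz j i (by rwa [Sym2.eq_swap] at he)).symm
  set D := dd n i j with hDdef
  have hD0 : D ≠ 0 := by
    intro h
    exact hij_ne (dd_inj (i := i) (x := i) (y := j) (by rw [dd_self, ← hDdef]; omega))
  have hD1 : D ≠ 1 := by
    intro h
    exact hji1 (dd_inj (i := i) (x := j) (y := i + 1) (by rw [dd_one hn2, ← hDdef]; exact h))
  have hDn1 : D ≠ n - 1 := by
    intro h
    apply hji2
    apply dd_inj (i := i)
    rcases dd_pred_cases hn2 i i with ⟨hp, _⟩ | hp
    · rw [hp, ← hDdef]; exact h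
    · rw [dd_self] at hp; omega
  have hDlt : D < n := dd_lt i j
  have hD2 : 2 ≤ D := by omega
  have hDn2 : D ≤ n - 2 := by omega
  have btw_iff : ∀ x : Fin n, btw i j x ↔ (0 < dd n i x ∧ dd n i x < D) := by
    intro x
    rw [hbtw]
    exact Iff.rfl
  have hddj1 : dd n i (j - 1) = D - 1 := by
    rcases dd_pred_cases hn2 i j with ⟨_, h0⟩ | hp
    · rw [← hDdef] at h0; omega
    · rw [← hDdef] at hp; omega
  have hddi1 : dd n i (i - 1) = n - 1 := by
    rcases dd_pred_cases hn2 i i with ⟨hp, _⟩ | hp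
    · exact hp
    · rw [dd_self] at hp; omega
  have hspk : ∀ a b : Fin n, s(a, b) ∈ F → s(a, b) ≠ s(i, j) → a ≠ i ∧ a ≠ j := by
    intro a b hab hne
    constructor
    · intro h
      subst h
      have hb := hFz a b hab
      rw [hb, hzij] at hne
      exact hne rfl
    · intro h
      subst h
      have hb := hFz a b hab
      rw [hb, hzji] at hne
      exact hne Sym2.eq_swap
  obtain ⟨g, hgF, hgne⟩ := Set.exists_ne_of_one_lt_ncard hFbig s(i, j)
  revert hgF hgne
  induction g using Sym2.ind with
  | _ k m =>
  intro hgF hgne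
  have hk_ne := hspk k m hgF hgne
  have hm_ne : m ≠ i ∧ m ≠ j := hspk m k (by rwa [Sym2.eq_swap]) (by rwa [Sym2.eq_swap])
  have memC : ∀ (C : Set (Sym2 (Fin n))) (u : Fin n) (w : G.Walk u u),
      {e | e ∈ w.edges} = C → ∀ e, (e ∈ C ↔ e ∈ w.edges) := by
    intro C u w hCw e
    rw [← hCw]; rfl
  have hCsub : ∀ (C : Set (Sym2 (Fin n))) (u : Fin n) (w : G.Walk u u),
      {e | e ∈ w.edges} = C → C ⊆ G.edgeSet := by
    intro C u w hCw e heC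
    exact w.edges_subset_edgeSet ((memC C u w hCw e).mp heC)
  have hFCsub : ∀ C : Set (Sym2 (Fin n)), C ∩ S = F → F ⊆ C := by
    intro C hCF e heF
    rw [← hCF] at heF
    exact heF.1
  have EV3 : ∀ (C : Set (Sym2 (Fin n))) (u : Fin n) (w : G.Walk u u), w.IsCycle →
      {e | e ∈ w.edges} = C → ∀ x : Fin n,
      Even ((if s(x, x + 1) ∈ C then 1 else 0) + (if s(x, x - 1) ∈ C then 1 else 0)
        + (if s(x, zf x) ∈ C then 1 else 0)) := by
    intro C u w hw hCw x
    have hmem := memC C u w hCw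
    have d12 : s(x, x + 1) ≠ s(x, x - 1) := by
      intro h
      rcases Sym2.eq_iff.mp h with ⟨_, h2⟩ | ⟨h1, h2⟩
      · exact hsucc_ne' x h2
      · exact hsucc_ne x h2
    have d13 : s(x, x + 1) ≠ s(x, zf x) := by
      intro h
      rcases Sym2.eq_iff.mp h with ⟨_, h2⟩ | ⟨h1, _⟩
      · exact hz2 x h2.symm
      · exact hzne x h1.symm
    have d23 : s(x, x - 1) ≠ s(x, zf x) := by
      intro h
      rcases Sym2.eq_iff.mp h with ⟨_, h2⟩ | ⟨h1, _⟩
      · exact hz3 x h2.symm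
      · exact hzne x h1.symm
    have hclassv : ∀ e ∈ w.edges, (fun e => decide (x ∈ e)) e = true →
        e ∈ ({s(x, x + 1), s(x, x - 1), s(x, zf x)} : Finset (Sym2 (Fin n))) := by
      intro e
      induction e using Sym2.ind with
      | _ a b =>
        intro hmem' hx
        simp only [decide_eq_true_eq, Sym2.mem_iff] at hx
        have hadj : G.Adj a b := G.mem_edgeSet.mp (w.edges_subset_edgeSet hmem')
        have key : ∀ c : Fin n, G.Adj x c →
            s(x, c) ∈ ({s(x, x + 1), s(x, x - 1), s(x, zf x)} : Finset (Sym2 (Fin n))) := by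
          intro c hc
          rcases hz4 x c hc with h | h | h <;> rw [h] <;> simp
        rcases hx with h | h
        · rw [← h] at hadj ⊢
          exact key b hadj
        · rw [← h] at hadj ⊢
          rw [show s(a, x) = s(x, a) from Sym2.eq_swap]
          exact key a hadj.symm
    have hcount := countP_eq_sum' w.edges hw.isTrail.edges_nodup (fun e => decide (x ∈ e))
        {s(x, x + 1), s(x, x - 1), s(x, zf x)} hclassv
        (by
          intro e he'
          simp only [Finset.mem_insert, Finset.mem_singleton] at he'
          rcases he' with rfl | rfl | rfl <;> simp)
    have hcong : w.edges.countP (bcross (fun v => decide (v = x)))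
        = w.edges.countP (fun e => decide (x ∈ e)) := by
      apply List.countP_congr
      intro e hmem'
      induction e using Sym2.ind with
      | _ a b =>
        have hab : a ≠ b := G.ne_of_adj (G.mem_edgeSet.mp (w.edges_subset_edgeSet hmem'))
        rw [bcross_mk]
        by_cases h1 : a = x <;> by_cases h2 : b = x
        · exact absurd (h1.trans h2.symm) hab
        · simp [h1, h2, Sym2.mem_iff]
        · simp [h1, h2, Sym2.mem_iff]
        · have hx1 : x ≠ a := fun h => h1 h.symm
          have hx2 : x ≠ b := fun h => h2 h.symm
          simp [h1, h2, Sym2.mem_iff, hx1, hx2]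
    have heven : Even (w.edges.countP (fun e => decide (x ∈ e))) := by
      rw [← hcong]
      exact (even_countP_bcross _ w).mpr rfl
    rw [hcount, Finset.sum_insert (by simp [d12, d13]),
      Finset.sum_insert (by simp [d23]), Finset.sum_singleton] at heven
    simpa only [hmem _, add_assoc] using heven
  have PROP1 : ∀ (C : Set (Sym2 (Fin n))) (u : Fin n) (w : G.Walk u u), w.IsCycle →
      {e | e ∈ w.edges} = C → C ∩ S = F → ∀ x : Fin n, s(x, zf x) ∈ F →
      (s(x, x - 1) ∈ C ↔ ¬ s(x, x + 1) ∈ C) := by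
    intro C u w hw hCw hCF x hxF
    have h3 : s(x, zf x) ∈ C := hFCsub C hCF hxF
    have hev := EV3 C u w hw hCw x
    rw [if_pos h3] at hev
    by_cases h1 : s(x, x + 1) ∈ C <;> by_cases h2 : s(x, x - 1) ∈ C
    · rw [if_pos h1, if_pos h2, Nat.even_iff] at hev; omega
    · simp [h1, h2]
    · simp [h1, h2]
    · rw [if_neg h1, if_neg h2, Nat.even_iff] at hev; omega
  have PROP2 : ∀ (C : Set (Sym2 (Fin n))) (u : Fin n) (w : G.Walk u u), w.IsCycle →
      {e | e ∈ w.edges} = C → C ∩ S = F → ∀ x : Fin n, s(x, zf x) ∉ F →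
      (s(x, x - 1) ∈ C ↔ s(x, x + 1) ∈ C) := by
    intro C u w hw hCw hCF x hxF
    have h3 : s(x, zf x) ∉ C := fun hc => hxF (hCF ▸ ⟨hc, hzS x⟩)
    have hev := EV3 C u w hw hCw x
    rw [if_neg h3] at hev
    by_cases h1 : s(x, x + 1) ∈ C <;> by_cases h2 : s(x, x - 1) ∈ C
    · simp [h1, h2]
    · rw [if_pos h1, if_neg h2, Nat.even_iff] at hev; omega
    · rw [if_neg h1, if_pos h2, Nat.even_iff] at hev; omega
    · simp [h1, h2]
  -- non-crossing of spokes, in decide form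
  have hspoke_iff : ∀ a b : Fin n, s(a, b) ∈ F → s(a, b) ≠ s(i, j) →
      ((0 < dd n i a ∧ dd n i a < D) ↔ (0 < dd n i b ∧ dd n i b < D)) := by
    intro a b haF hane
    have hx := hnoint a b haF hane
    have h1 := btw_iff a
    have h2 := btw_iff b
    rw [Xor'] at hx
    rw [xor_iff_not_iff, not_not] at hx
    tauto
  have CUTA : ∀ (C : Set (Sym2 (Fin n))) (u : Fin n) (w : G.Walk u u), w.IsCycle →
      {e | e ∈ w.edges} = C → C ∩ S = F → (s(i, i + 1) ∈ C ↔ s(j - 1, j) ∈ C) := by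
    intro C u w hw hCw hCF
    have hmem := memC C u w hCw
    rw [hmem _, hmem _]
    apply cut_core w hw (fun y => decide (0 < dd n i y ∧ dd n i y < D))
    · intro h
      rcases Sym2.eq_iff.mp h with ⟨h1, h2⟩ | ⟨h1, h2⟩
      · exact hji1 h2.symm
      · exact hij_ne h1
    · rw [bcross_mk]
      have e1 : (decide (0 < dd n i i ∧ dd n i i < D)) = false := by
        simp [dd_self]
      have e2 : (decide (0 < dd n i (i + 1) ∧ dd n i (i + 1) < D)) = true := by
        rw [dd_one hn2]
        simp only [decide_eq_true_eq]
        omega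
      rw [e1, e2]; rfl
    · rw [bcross_mk]
      have e1 : (decide (0 < dd n i (j - 1) ∧ dd n i (j - 1) < D)) = true := by
        rw [hddj1]
        simp only [decide_eq_true_eq]
        omega
      have e2 : (decide (0 < dd n i j ∧ dd n i j < D)) = false := by
        rw [← hDdef]
        simp only [decide_eq_false_iff_not]
        omega
      rw [e1, e2]; rfl
    · intro e'
      induction e' using Sym2.ind with
      | _ a b =>
        intro hmem' hcross
        rw [bcross_mk] at hcross
        have hne' : ¬((0 < dd n i a ∧ dd n i a < D) ↔ (0 < dd n i b ∧ dd n i b < D)) := by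
          intro hiff
          have hfa : (decide (0 < dd n i a ∧ dd n i a < D))
              = (decide (0 < dd n i b ∧ dd n i b < D)) := decide_eq_decide.mpr hiff
          simp [hfa] at hcross
        by_cases hsmem : s(a, b) ∈ S
        · exfalso
          have heF : s(a, b) ∈ F := hCF ▸ ⟨(hmem _).mpr hmem', hsmem⟩
          by_cases hee : s(a, b) = s(i, j)
          · rcases Sym2.eq_iff.mp hee with ⟨h1, h2⟩ | ⟨h1, h2⟩ <;> subst h1 <;> subst h2 <;>
            · apply hne'
              rw [dd_self, ← hDdef]
              constructor <;> intro hh <;> omega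
          · exact hne' (hspoke_iff a b heF hee)
        · have hedge : s(a, b) ∈ G.edgeSet := w.edges_subset_edgeSet hmem'
          have hvex : ∃ v : Fin n, s(a, b) = s(v, v + 1) := by
            rw [hS] at hsmem
            simp only [Set.mem_setOf_eq, not_and, not_forall, not_not] at hsmem
            exact hsmem hedge
          obtain ⟨v, hv⟩ := hvex
          have hcc : ¬((0 < dd n i v ∧ dd n i v < D) ↔ (0 < dd n i (v + 1) ∧ dd n i (v + 1) < D)) := by
            rcases Sym2.eq_iff.mp hv with ⟨h1, h2⟩ | ⟨h1, h2⟩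
            · rw [← h2, ← h1]; exact hne'
            · rw [← h1, ← h2]; intro hh; exact hne' hh.symm
          rcases dd_succ_cases hn2 i v with ⟨hv1, hv2⟩ | hv3
          · exfalso
            apply hcc
            rw [hv1, hv2]
            constructor <;> intro hh <;> omega
          · have hord : dd n i v = 0 ∨ dd n i v = D - 1 := by
              by_cases hP : 0 < dd n i v ∧ dd n i v < D
              · have hQ : ¬(0 < dd n i (v + 1) ∧ dd n i (v + 1) < D) := fun hq => hcc ⟨fun _ => hq, fun _ => hP⟩
                rw [hv3] at hQ
                omega
              · have hQ : (0 < dd n i (v + 1) ∧ dd n i (v + 1) < D) := by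
                  by_contra hq
                  exact hcc ⟨fun hp => absurd hp hP, fun hq' => absurd hq' hq⟩
                rw [hv3] at hQ
                omega
            rcases hord with h0 | h0
            · left
              rw [hv]
              have : v = i := dd_inj (i := i) (x := v) (y := i) (by rw [h0, dd_self])
              rw [this]
            · right
              rw [hv]
              have : v = j - 1 := dd_inj (i := i) (x := v) (y := j - 1) (by rw [h0, hddj1])
              rw [this, sub_add_cancel]
  have CUTB : ∀ (C : Set (Sym2 (Fin n))) (u : Fin n) (w : G.Walk u u), w.IsCycle →
      {e | e ∈ w.edges} = C → C ∩ S = F → (s(i - 1, i) ∈ C ↔ s(j, j + 1) ∈ C) := by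
    intro C u w hw hCw hCF
    have hmem := memC C u w hCw
    rw [hmem _, hmem _]
    apply cut_core w hw (fun y => decide (dd n i y ≤ D))
    · intro h
      rcases Sym2.eq_iff.mp h with ⟨h1, h2⟩ | ⟨h1, h2⟩
      · exact hji2 h1.symm
      · exact hij_ne h2
    · rw [bcross_mk]
      have e1 : (decide (dd n i (i - 1) ≤ D)) = false := by
        rw [hddi1]
        simp only [decide_eq_false_iff_not]
        omega
      have e2 : (decide (dd n i i ≤ D)) = true := by
        rw [dd_self]
        simp
      rw [e1, e2]; rfl
    · rw [bcross_mk]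
      have e1 : (decide (dd n i j ≤ D)) = true := by
        rw [← hDdef]; simp
      have e2 : (decide (dd n i (j + 1) ≤ D)) = false := by
        rcases dd_succ_cases hn2 i j with ⟨hv1, _⟩ | hv3
        · rw [← hDdef] at hv1; omega
        · rw [hv3, ← hDdef]
          simp only [decide_eq_false_iff_not]
          omega
      rw [e1, e2]; rfl
    · intro e'
      induction e' using Sym2.ind with
      | _ a b =>
        intro hmem' hcross
        rw [bcross_mk] at hcross
        have hne' : ¬((dd n i a ≤ D) ↔ (dd n i b ≤ D)) := by
          intro hiff
          have hfa : (decide (dd n i a ≤ D)) = (decide (dd n i b ≤ D)) := decide_eq_decide.mpr hiff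
          simp [hfa] at hcross
        by_cases hsmem : s(a, b) ∈ S
        · exfalso
          have heF : s(a, b) ∈ F := hCF ▸ ⟨(hmem _).mpr hmem', hsmem⟩
          by_cases hee : s(a, b) = s(i, j)
          · rcases Sym2.eq_iff.mp hee with ⟨h1, h2⟩ | ⟨h1, h2⟩ <;> subst h1 <;> subst h2 <;>
            · apply hne'
              rw [dd_self, ← hDdef]
              constructor <;> intro hh <;> omega
          · have hx := hspoke_iff a b heF hee
            have ha_ne := hspk a b heF hee
            have hb_ne := hspk b a (by rwa [Sym2.eq_swap]) (by rwa [Sym2.eq_swap])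
            have ha0 : dd n i a ≠ 0 := fun h =>
              ha_ne.1 (dd_inj (i := i) (x := a) (y := i) (by rw [h, dd_self]))
            have haD : dd n i a ≠ D := fun h =>
              ha_ne.2 (dd_inj (i := i) (x := a) (y := j) (by rw [h, ← hDdef]))
            have hb0 : dd n i b ≠ 0 := fun h =>
              hb_ne.1 (dd_inj (i := i) (x := b) (y := i) (by rw [h, dd_self]))
            have hbD : dd n i b ≠ D := fun h =>
              hb_ne.2 (dd_inj (i := i) (x := b) (y := j) (by rw [h, ← hDdef]))
            apply hne'
            by_cases hP : 0 < dd n i a ∧ dd n i a < D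
            · have hQ := hx.mp hP
              constructor <;> intro <;> omega
            · have hQ : ¬(0 < dd n i b ∧ dd n i b < D) := fun hq => hP (hx.mpr hq)
              constructor <;> intro <;> omega
        · have hedge : s(a, b) ∈ G.edgeSet := w.edges_subset_edgeSet hmem'
          have hvex : ∃ v : Fin n, s(a, b) = s(v, v + 1) := by
            rw [hS] at hsmem
            simp only [Set.mem_setOf_eq, not_and, not_forall, not_not] at hsmem
            exact hsmem hedge
          obtain ⟨v, hv⟩ := hvex
          have hcc : ¬((dd n i v ≤ D) ↔ (dd n i (v + 1) ≤ D)) := by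
            rcases Sym2.eq_iff.mp hv with ⟨h1, h2⟩ | ⟨h1, h2⟩
            · rw [← h2, ← h1]; exact hne'
            · rw [← h1, ← h2]; intro hh; exact hne' hh.symm
          rcases dd_succ_cases hn2 i v with ⟨hv1, hv2⟩ | hv3
          · left
            rw [hv]
            have hvi : v + 1 = i := dd_wrap hn2 hv1
            have hvv : v = i - 1 := by rw [← hvi, add_sub_cancel_right]
            rw [hvv, sub_add_cancel]
          · have h0 : dd n i v = D := by
              rw [hv3] at hcc
              by_cases hP : dd n i v ≤ D
              · have : ¬(dd n i v + 1 ≤ D) := fun hq => hcc ⟨fun _ => hq, fun _ => hP⟩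
                omega
              · have : dd n i v + 1 ≤ D := by
                  by_contra hq
                  exact hcc ⟨fun hp => absurd hp hP, fun hq' => absurd hq' hq⟩
                omega
            right
            rw [hv]
            have : v = j := dd_inj (i := i) (x := v) (y := j) (by rw [h0, ← hDdef])
            rw [this]
  have BASE : ∀ (C : Set (Sym2 (Fin n))) (u : Fin n) (w : G.Walk u u), w.IsCycle →
      {e | e ∈ w.edges} = C → C ∩ S = F → (s(i, i + 1) ∈ C ↔ btw i j k) := by
    intro C u w hw hCw hCF
    have hmem := memC C u w hCw
    have hdegi : s(i, i - 1) ∈ C ↔ ¬ s(i, i + 1) ∈ C :=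
      PROP1 C u w hw hCw hCF i (by rw [hzij]; exact he)
    have hiw : i ∈ w.support :=
      w.fst_mem_support_of_mem_edges ((hmem _).mp (hFCsub C hCF he))
    have hkw : s(k, m) ∈ w.edges := (hmem _).mp (hFCsub C hCF hgF)
    have hwalk : ∀ (U : Set (Fin n)), (∀ x y : Fin n, s(x, y) ∈ C → x ∈ U → y ∈ U) →
        i ∈ U → k ∈ U := by
      intro U hU hiU
      have hrot := w.rotate_edges i hiw
      have hkr : s(k, m) ∈ (w.rotate i hiw).edges := hrot.mem_iff.mpr hkw
      have hks : k ∈ (w.rotate i hiw).support := (w.rotate i hiw).fst_mem_support_of_mem_edges hkr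
      have hsub2 := (w.rotate i hiw).edges_takeUntil_subset hks
      exact walk_reach C U hU ((w.rotate i hiw).takeUntil k hks)
        (fun e heee => (hmem e).mpr (hrot.mem_iff.mp (hsub2 heee))) hiU
    have hk0 : dd n i k ≠ 0 := fun h =>
      hk_ne.1 (dd_inj (i := i) (x := k) (y := i) (by rw [h, dd_self]))
    have hkD : dd n i k ≠ D := fun h =>
      hk_ne.2 (dd_inj (i := i) (x := k) (y := j) (by rw [h, ← hDdef]))
    constructor
    · intro hin
      by_contra hbk
      rw [btw_iff] at hbk
      have hni : s(i, i - 1) ∉ C := fun hc => (hdegi.mp hc) hin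
      have hnj : s(j, j + 1) ∉ C := by
        intro hc
        apply hni
        have hcc := (CUTB C u w hw hCw hCF).mpr hc
        rwa [Sym2.eq_swap] at hcc
      have hclosed : ∀ x y : Fin n, s(x, y) ∈ C → x ∈ {x : Fin n | dd n i x ≤ D} →
          y ∈ {x : Fin n | dd n i x ≤ D} := by
        intro x y hxyC hxU
        have hadj : G.Adj x y := G.mem_edgeSet.mp (hCsub C u w hCw hxyC)
        simp only [Set.mem_setOf_eq] at hxU ⊢
        rcases hz4 x y hadj with rfl | rfl | rfl
        · rcases dd_succ_cases hn2 i x with ⟨_, h0⟩ | hsx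
          · rw [h0]; omega
          · rw [hsx]
            by_contra hgt
            have hxj : x = j := dd_inj (i := i) (x := x) (y := j) (by rw [← hDdef]; omega)
            subst hxj
            exact hnj hxyC
        · rcases dd_pred_cases hn2 i x with ⟨hw1, hw2⟩ | hpx
          · have hxi : x = i := dd_inj (i := i) (x := x) (y := i) (by rw [hw2, dd_self])
            subst hxi
            exact absurd hxyC hni
          · omega
        · have hyF : s(x, zf x) ∈ F := hCF ▸ ⟨hxyC, hzS x⟩
          by_cases hee : s(x, zf x) = s(i, j)
          · rcases Sym2.eq_iff.mp hee with ⟨h1, h2⟩ | ⟨h1, h2⟩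
            · rw [h2, ← hDdef]
            · rw [h2, dd_self]; omega
          · have hx_ne := hspk x (zf x) hyF hee
            have hy_ne := hspk (zf x) x (by rwa [Sym2.eq_swap]) (by rwa [Sym2.eq_swap])
            have hiff := hspoke_iff x (zf x) hyF hee
            have hx0 : dd n i x ≠ 0 := fun h =>
              hx_ne.1 (dd_inj (i := i) (x := x) (y := i) (by rw [h, dd_self]))
            have hxD : dd n i x ≠ D := fun h =>
              hx_ne.2 (dd_inj (i := i) (x := x) (y := j) (by rw [h, ← hDdef]))
            by_cases hbx : 0 < dd n i x ∧ dd n i x < D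
            · have := hiff.mp hbx; omega
            · omega
      have hkU := hwalk _ hclosed (by simp [dd_self])
      simp only [Set.mem_setOf_eq] at hkU
      omega
    · intro hbk
      by_contra hin
      rw [btw_iff] at hbk
      have hnj : s(j - 1, j) ∉ C := fun hc => hin ((CUTA C u w hw hCw hCF).mpr hc)
      have hclosed : ∀ x y : Fin n, s(x, y) ∈ C →
          x ∈ {x : Fin n | ¬(0 < dd n i x ∧ dd n i x < D)} →
          y ∈ {x : Fin n | ¬(0 < dd n i x ∧ dd n i x < D)} := by
        intro x y hxyC hxU
        have hadj : G.Adj x y := G.mem_edgeSet.mp (hCsub C u w hCw hxyC)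
        simp only [Set.mem_setOf_eq] at hxU ⊢
        rcases hz4 x y hadj with rfl | rfl | rfl
        · rcases dd_succ_cases hn2 i x with ⟨_, h0⟩ | hsx
          · rw [h0]; omega
          · rw [hsx]
            intro hcon
            have hx0 : dd n i x = 0 := by omega
            have hxi : x = i := dd_inj (i := i) (x := x) (y := i) (by rw [hx0, dd_self])
            subst hxi
            exact hin hxyC
        · rcases dd_pred_cases hn2 i x with ⟨hw1, hw2⟩ | hpx
          · rw [hw1]; omega
          · intro hcon
            have hxj : x = j := dd_inj (i := i) (x := x) (y := j) (by rw [← hDdef]; omega)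
            subst hxj
            apply hnj
            rwa [Sym2.eq_swap] at hxyC
        · have hyF : s(x, zf x) ∈ F := hCF ▸ ⟨hxyC, hzS x⟩
          by_cases hee : s(x, zf x) = s(i, j)
          · rcases Sym2.eq_iff.mp hee with ⟨h1, h2⟩ | ⟨h1, h2⟩
            · rw [h2, ← hDdef]; omega
            · rw [h2, dd_self]; omega
          · have hiff := hspoke_iff x (zf x) hyF hee
            exact fun hh => hxU (hiff.mpr hh)
      have hkU := hwalk _ hclosed (by simp [dd_self])
      simp only [Set.mem_setOf_eq] at hkU
      omega
  have KEY : ∀ (Ca Cb : Set (Sym2 (Fin n))),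
      ((∃ (u : Fin n) (w : G.Walk u u), w.IsCycle ∧ {e | e ∈ w.edges} = Ca) ∧ Ca ∩ S = F) →
      ((∃ (u : Fin n) (w : G.Walk u u), w.IsCycle ∧ {e | e ∈ w.edges} = Cb) ∧ Cb ∩ S = F) →
      Ca ⊆ Cb := by
    rintro Ca Cb ⟨⟨ua, wa, hwa, hCa⟩, hFa⟩ ⟨⟨ub, wb, hwb, hCb⟩, hFb⟩
    have Pbase : (s(i, i + 1) ∈ Ca ↔ s(i, i + 1) ∈ Cb) :=
      (BASE Ca ua wa hwa hCa hFa).trans (BASE Cb ub wb hwb hCb hFb).symm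
    have Pstep : ∀ v : Fin n, (s(v, v + 1) ∈ Ca ↔ s(v, v + 1) ∈ Cb) →
        (s(v + 1, v + 1 + 1) ∈ Ca ↔ s(v + 1, v + 1 + 1) ∈ Cb) := by
      intro v hP
      have hv : (v + 1) - 1 = v := add_sub_cancel_right v 1
      have hsw : s(v + 1, (v + 1) - 1) = s(v, v + 1) := by
        rw [hv, Sym2.eq_swap]
      by_cases ht : s(v + 1, zf (v + 1)) ∈ F
      · have a1 := PROP1 Ca ua wa hwa hCa hFa (v + 1) ht
        have a2 := PROP1 Cb ub wb hwb hCb hFb (v + 1) ht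
        rw [hsw] at a1 a2
        tauto
      · have a1 := PROP2 Ca ua wa hwa hCa hFa (v + 1) ht
        have a2 := PROP2 Cb ub wb hwb hCb hFb (v + 1) ht
        rw [hsw] at a1 a2
        tauto
    open scoped Fin.NatCast Fin.CommRing in
    have Pall : ∀ v : Fin n, (s(v, v + 1) ∈ Ca ↔ s(v, v + 1) ∈ Cb) := by
      have Ht : ∀ t : ℕ, (s(i + (t : Fin n), i + (t : Fin n) + 1) ∈ Ca ↔
          s(i + (t : Fin n), i + (t : Fin n) + 1) ∈ Cb) := by
        intro t
        induction t with
        | zero => simpa using Pbase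
        | succ t ih =>
          have hc : ((((t : ℕ) + 1 : ℕ)) : Fin n) = ((t : ℕ) : Fin n) + 1 := by
            push_cast
            ring
          rw [hc, ← add_assoc]
          exact Pstep _ ih
      intro v
      have h1 : ((((v - i) : Fin n).val : ℕ) : Fin n) = v - i := Fin.cast_val_eq_self _
      have h2 : i + (v - i) = v := by ring
      have hres := Ht (v - i).val
      rw [h1, h2] at hres
      exact hres
    intro e' he'
    by_cases hs' : e' ∈ S
    · have heF : e' ∈ F := by rw [← hFa]; exact ⟨he', hs'⟩
      rw [← hFb] at heF
      exact heF.1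
    · have hedge : e' ∈ G.edgeSet := hCsub Ca ua wa hCa he'
      have hvex : ∃ v : Fin n, e' = s(v, v + 1) := by
        rw [hS] at hs'
        simp only [Set.mem_setOf_eq, not_and, not_forall, not_not] at hs'
        exact hs' hedge
      obtain ⟨v, rfl⟩ := hvex
      exact (Pall v).mp he'
  intro C₁ C₂ h₁ h₂
  exact Set.Subset.antisymm (KEY C₁ C₂ h₁ h₂) (KEY C₂ C₁ h₂ h₁)
end
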